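/- Let V be the Voronoi cell of 0 of a full-rank lattice Λ in R^n, with covering radius r̄_1, and let Λ_2 ⊂ Λ be a sublattice with inscribed radius r_2. If x ∈ V_{Λ_2}(0) is at distance greater than r̄_1 from the boundary of V_{Λ_2}(0), then the nearest Λ-point Q_Λ(x) lies in V_{Λ_2}(0). Consequently, the interior of γ·V_{Λ_2}(0) with γ = 1 − r̄_1/r_2 is contained in ∪_{λ ∈ V_{Λ_2}(0) ∩ Λ} V_Λ(λ), provided γ > 0. -/

import Mathlib

open MeasureTheory Pointwise

/-- The (closed) Voronoi region of the origin for a set of lattice points `L`. -/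
def cVor (n : ℕ) (L : Set (EuclideanSpace ℝ (Fin n))) : Set (EuclideanSpace ℝ (Fin n)) :=
  {x | ∀ l ∈ L, ‖x‖ ≤ ‖x - l‖}

lemma cVor_convex (n : ℕ) (L : Set (EuclideanSpace ℝ (Fin n))) : Convex ℝ (cVor n L) := by
  have : cVor n L = ⋂ l ∈ L, {x : EuclideanSpace ℝ (Fin n) | 2 * inner ℝ x l ≤ ‖l‖ ^ 2} := by
    ext x
    simp only [cVor, Set.mem_setOf_eq, Set.mem_iInter]
    refine forall₂_congr fun l hl => ?_
    rw [← Real.sqrt_sq (norm_nonneg x), ← Real.sqrt_sq (norm_nonneg (x - l)),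
      Real.sqrt_le_sqrt_iff (by positivity), norm_sub_sq_real]
    constructor <;> intro h <;> nlinarith [norm_nonneg l]
  rw [this]
  exact convex_iInter₂ fun l _ => convex_halfSpace_le
    ⟨fun x y => by rw [inner_add_left]; ring, fun c x => by rw [real_inner_smul_left, smul_eq_mul]; ring⟩ _

lemma cVor_closed (n : ℕ) (L : Set (EuclideanSpace ℝ (Fin n))) : IsClosed (cVor n L) := by
  have : cVor n L = ⋂ l ∈ L, {x : EuclideanSpace ℝ (Fin n) | ‖x‖ ≤ ‖x - l‖} := by
    ext x; simp [cVor]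
  rw [this]
  exact isClosed_biInter fun l _ =>
    isClosed_le (continuous_norm) ((continuous_id.sub continuous_const).norm)

theorem stmt13 (n : ℕ)
    (Λ Λ2 : AddSubgroup (EuclideanSpace ℝ (Fin n)))
    (hnest : Λ2 ≤ Λ)
    (Q : EuclideanSpace ℝ (Fin n) → EuclideanSpace ℝ (Fin n))
    (rbar1 r2 : ℝ) (hr2pos : 0 < r2)
    (hQmem : ∀ x, Q x ∈ Λ)
    (hQnear : ∀ x, ∀ l ∈ Λ, ‖x - Q x‖ ≤ ‖x - l‖)
    (hQcov : ∀ x, ‖x - Q x‖ ≤ rbar1)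
    (hr2 : Metric.ball 0 r2 ⊆ cVor n (Λ2 : Set (EuclideanSpace ℝ (Fin n))))
    (cells : EuclideanSpace ℝ (Fin n) → Set (EuclideanSpace ℝ (Fin n)))
    (hpart : ∀ x : EuclideanSpace ℝ (Fin n), ∃! l, l ∈ Λ ∧ x ∈ cells l)
    (hcells : ∀ l ∈ Λ, ∀ x ∈ cells l, ∀ m ∈ Λ, ‖x - l‖ ≤ ‖x - m‖)
    (γ : ℝ) (hγ : γ = 1 - rbar1 / r2) (hγpos : 0 < γ) :
    (∀ x ∈ cVor n (Λ2 : Set (EuclideanSpace ℝ (Fin n))),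
        rbar1 < Metric.infDist x (frontier (cVor n (Λ2 : Set (EuclideanSpace ℝ (Fin n))))) →
        Q x ∈ cVor n (Λ2 : Set (EuclideanSpace ℝ (Fin n)))) ∧
      interior (γ • cVor n (Λ2 : Set (EuclideanSpace ℝ (Fin n)))) ⊆
        ⋃ l ∈ cVor n (Λ2 : Set (EuclideanSpace ℝ (Fin n))) ∩ (Λ : Set (EuclideanSpace ℝ (Fin n))),
          cells l := by
  set V : Set (EuclideanSpace ℝ (Fin n)) := cVor n (Λ2 : Set (EuclideanSpace ℝ (Fin n))) with hVdef
  have hVconv : Convex ℝ V := cVor_convex n _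
  have hVclosed : IsClosed V := cVor_closed n _
  have hrbar1 : 0 ≤ rbar1 := le_trans (norm_nonneg _) (hQcov 0)
  have hV0 : (0 : EuclideanSpace ℝ (Fin n)) ∈ V := by
    intro l hl; simpa using norm_nonneg (0 - l)
  have hcb : Metric.closedBall (0 : EuclideanSpace ℝ (Fin n)) r2 ⊆ V := by
    rw [← closure_ball (0 : EuclideanSpace ℝ (Fin n)) (ne_of_gt hr2pos)]
    exact hVclosed.closure_subset_iff.mpr hr2
  have hγ1 : γ ≤ 1 := by
    rw [hγ]; have : 0 ≤ rbar1 / r2 := div_nonneg hrbar1 hr2pos.le; linarith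
  have h1γ : 1 - γ = rbar1 / r2 := by rw [hγ]; ring
  -- key geometric lemma
  have keyA : ∀ y ∈ γ • V, ∀ z : EuclideanSpace ℝ (Fin n), ‖z - y‖ ≤ rbar1 → z ∈ V := by
    rintro y ⟨v, hv, rfl⟩ z hz
    rcases eq_or_lt_of_le hrbar1 with h0 | h0
    · have hz0 : z = γ • v := by
        have : ‖z - γ • v‖ ≤ 0 := by rw [← h0] at hz; exact hz
        have := le_antisymm this (norm_nonneg _)
        rwa [norm_eq_zero, sub_eq_zero] at this
      have := hVconv hv hV0 hγpos.le (by linarith : (0:ℝ) ≤ 1 - γ) (by ring)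
      simpa [hz0] using this
    · have h1γpos : 0 < 1 - γ := by
        rw [h1γ]; exact div_pos h0 hr2pos
      set u : EuclideanSpace ℝ (Fin n) := (1 - γ)⁻¹ • (z - γ • v) with hu
      have huV : u ∈ V := by
        apply hcb
        rw [Metric.mem_closedBall, dist_zero_right, hu, norm_smul, Real.norm_eq_abs,
          abs_of_pos (inv_pos.mpr h1γpos)]
        rw [h1γ]
        calc (rbar1 / r2)⁻¹ * ‖z - γ • v‖ ≤ (rbar1 / r2)⁻¹ * rbar1 := by
              apply mul_le_mul_of_nonneg_left hz
              positivity
          _ = r2 := by field_simp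
      have := hVconv hv huV hγpos.le h1γpos.le (by ring)
      have heq : γ • v + (1 - γ) • u = z := by
        rw [hu, smul_inv_smul₀ (ne_of_gt h1γpos)]; abel
      rwa [heq] at this
  constructor
  · -- part 1
    intro x hx hdist
    by_contra hQx
    have hinf : ∀ p ∈ Metric.closedBall x rbar1, p ∉ frontier V := by
      intro p hp hf
      have h1 := Metric.infDist_le_dist_of_mem (x := x) hf
      have h2 : dist x p ≤ rbar1 := by rw [dist_comm]; exact hp
      linarith
    have hxint : x ∈ interior V := by
      have hxc : x ∈ closure V := subset_closure hx
      rw [closure_eq_interior_union_frontier] at hxc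
      rcases hxc with h | h
      · exact h
      · exact absurd h (hinf x (Metric.mem_closedBall_self hrbar1))
    have hs : IsPreconnected (Metric.closedBall x rbar1) :=
      (convex_closedBall x rbar1).isPreconnected
    have hQs : Q x ∈ Metric.closedBall x rbar1 := by
      rw [Metric.mem_closedBall, dist_comm, dist_eq_norm]
      exact hQcov x
    have hcover : Metric.closedBall x rbar1 ⊆ interior V ∪ Vᶜ := by
      intro p hp
      by_cases hpV : p ∈ V
      · left
        have hpc : p ∈ closure V := subset_closure hpV
        rw [closure_eq_interior_union_frontier] at hpc
        rcases hpc with h | h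
        · exact h
        · exact absurd h (hinf p hp)
      · right; exact hpV
    obtain ⟨p, -, hp1, hp2⟩ := hs (interior V) Vᶜ isOpen_interior hVclosed.isOpen_compl
      hcover ⟨x, Metric.mem_closedBall_self hrbar1, hxint⟩ ⟨Q x, hQs, hQx⟩
    exact hp2 (interior_subset hp1)
  · -- part 2
    intro y hy
    have hyγ : y ∈ γ • V := interior_subset hy
    obtain ⟨l, ⟨hlΛ, hlc⟩, -⟩ := hpart y
    have hyl : ‖y - l‖ ≤ rbar1 :=
      le_trans (hcells l hlΛ y hlc (Q y) (hQmem y)) (hQcov y)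
    have hlV : l ∈ V := keyA y hyγ l (by rw [norm_sub_rev]; exact hyl)
    exact Set.mem_biUnion ⟨hlV, hlΛ⟩ hlc
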